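/- Suppose G is a simple graph (μ takes values in {0,1}) that is a tree on V = {1,…,n+1}. For each edge e = {a,b} of G, let I_e ⊆ [n] be the vertex set of the connected component of G − e (the graph G with edge e deleted) that does not contain n+1, and let q_e := (1/|I_e|)·e_{I_e} ∈ U. Then the n points q_e (one for each edge of G) are affinely independent, and the union of all bounded cells, ⋃ { C(p) : p ∈ U, C(p) bounded }, equals the convex hull of the points q_e; in particular the bounded complex of the restricted graphical arrangement of a tree is an (n−1)-dimensional simplex. -/

import Mathlib

open Finset

/-- The vertex-induced subgraph on `S` of the multigraph with edge-multiplicity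
function `μ` is connected: any two vertices of `S` are joined by a walk inside `S`. -/
def ConnectedOn {n : ℕ} (μ : Fin (n + 1) → Fin (n + 1) → ℕ) (S : Set (Fin (n + 1))) : Prop :=
  ∀ i ∈ S, ∀ j ∈ S, Relation.ReflTransGen (fun a b => a ∈ S ∧ b ∈ S ∧ 1 ≤ μ a b) i j

/-- The affine subspace `U = { x ∈ ℝ^{n+1} : x_{n+1} = 0, x_1 + ⋯ + x_n = 1 }`. -/
def U (n : ℕ) : Set (Fin (n + 1) → ℝ) :=
  {x | x (Fin.last n) = 0 ∧ ∑ i : Fin n, x i.castSucc = 1}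

/-- The open cell of `p` in the restriction of the graphical arrangement of `μ` to `U`. -/
def openCell {n : ℕ} (μ : Fin (n + 1) → Fin (n + 1) → ℕ) (p : Fin (n + 1) → ℝ) :
    Set (Fin (n + 1) → ℝ) :=
  {q | q ∈ U n ∧ ∀ i j, 1 ≤ μ i j →
    ((q i < q j ↔ p i < p j) ∧ (q i = q j ↔ p i = p j))}

/-- The closed cell of `p` in the restriction of the graphical arrangement of `μ` to `U`. -/
def closedCell {n : ℕ} (μ : Fin (n + 1) → Fin (n + 1) → ℕ) (p : Fin (n + 1) → ℝ) :
    Set (Fin (n + 1) → ℝ) :=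
  {q | q ∈ U n ∧ ∀ i j, 1 ≤ μ i j →
    ((p i < p j → q i ≤ q j) ∧ (p i = p j → q i = q j))}

/-- `p`-equivalence: `i ∼_p j` iff there is a path in the graph along which `p` is constant. -/
def pEquiv {n : ℕ} (μ : Fin (n + 1) → Fin (n + 1) → ℕ) (p : Fin (n + 1) → ℝ)
    (i j : Fin (n + 1)) : Prop :=
  Relation.ReflTransGen (fun a b => 1 ≤ μ a b ∧ p a = p b) i j

/-- `d_I(i)`: the number of edges from vertex `i` to the complement of `I`. -/
def dI {n : ℕ} (μ : Fin (n + 1) → Fin (n + 1) → ℕ) (I : Finset (Fin (n + 1)))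
    (i : Fin (n + 1)) : ℕ :=
  ∑ j ∈ Iᶜ, μ i j

/-- `ε_I(i) = d_I(i)` for `i ∈ I` and `0` otherwise. -/
def epsI {n : ℕ} (μ : Fin (n + 1) → Fin (n + 1) → ℕ) (I : Finset (Fin (n + 1)))
    (i : Fin (n + 1)) : ℕ :=
  if i ∈ I then dI μ I i else 0

/-- The point `(1/|I|) · e_I`, where `e_I` is the 0/1 indicator vector of `I`. -/
noncomputable def qI {n : ℕ} (I : Finset (Fin (n + 1))) : Fin (n + 1) → ℝ :=
  fun i => if i ∈ I then 1 / (I.card : ℝ) else 0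

/-- `D_i(p)`: the number of edges `ij` with `p_i > p_j`. -/
noncomputable def Dlab {n : ℕ} (μ : Fin (n + 1) → Fin (n + 1) → ℕ) (p : Fin (n + 1) → ℝ) (i : Fin n) : ℕ :=
  ∑ j ∈ Finset.univ.filter (fun j => p j < p i.castSucc), μ i.castSucc j

/-- The monomial `m_I = ∏_{i ∈ [n]} x_i^{ε_I(i)}`. -/
noncomputable def mI {n : ℕ} (k : Type*) [Field k] (μ : Fin (n + 1) → Fin (n + 1) → ℕ)
    (I : Finset (Fin (n + 1))) : MvPolynomial (Fin n) k :=
  ∏ i : Fin n, MvPolynomial.X i ^ epsI μ I i.castSucc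

/-- The monomial ideal `M_G = ⟨ m_I : ∅ ≠ I ⊆ [n] ⟩`. -/
noncomputable def MG {n : ℕ} (k : Type*) [Field k] (μ : Fin (n + 1) → Fin (n + 1) → ℕ) :
    Ideal (MvPolynomial (Fin n) k) :=
  Ideal.span {f | ∃ I : Finset (Fin (n + 1)), I.Nonempty ∧ Fin.last n ∉ I ∧ f = mI k μ I}



section GraphAux
variable {n : ℕ} {G' : SimpleGraph (Fin (n + 1))} {Ie : Sym2 (Fin (n + 1)) → Finset (Fin (n + 1))}

lemma aux_last_not_mem (hIe : ∀ e ∈ G'.edgeSet, ∀ v : Fin (n + 1),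
      v ∈ Ie e ↔ ¬ (G'.deleteEdges {e}).Reachable v (Fin.last n))
    {e : Sym2 (Fin (n+1))} (he : e ∈ G'.edgeSet) : Fin.last n ∉ Ie e := by
  rw [hIe e he]
  exact fun h => h (SimpleGraph.Reachable.refl _)

lemma aux_cut (hIe : ∀ e ∈ G'.edgeSet, ∀ v : Fin (n + 1),
      v ∈ Ie e ↔ ¬ (G'.deleteEdges {e}).Reachable v (Fin.last n))
    {e : Sym2 (Fin (n+1))} (he : e ∈ G'.edgeSet) {u v : Fin (n+1)} (huv : G'.Adj u v)
    (hne : s(u, v) ≠ e) : (u ∈ Ie e ↔ v ∈ Ie e) := by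
  have hadj : (G'.deleteEdges {e}).Adj u v := by
    rw [SimpleGraph.deleteEdges_adj]
    exact ⟨huv, by simpa using hne⟩
  rw [hIe e he u, hIe e he v]
  constructor
  · exact fun h hr => h (hadj.reachable.trans hr)
  · exact fun h hr => h (hadj.symm.reachable.trans hr)

lemma aux_not_both_out (htree : G'.IsTree)
    (hIe : ∀ e ∈ G'.edgeSet, ∀ v : Fin (n + 1),
      v ∈ Ie e ↔ ¬ (G'.deleteEdges {e}).Reachable v (Fin.last n))
    {a b : Fin (n+1)} (hab : G'.Adj a b) (ha : a ∉ Ie s(a, b)) : b ∈ Ie s(a, b) := by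
  have hbr : G'.IsBridge s(a, b) :=
    SimpleGraph.isAcyclic_iff_forall_adj_isBridge.mp htree.IsAcyclic hab
  rw [SimpleGraph.isBridge_iff] at hbr
  have he : s(a, b) ∈ G'.edgeSet := hab
  rw [hIe _ he] at ha
  rw [hIe _ he]
  intro hb
  exact hbr ((not_not.mp ha).trans hb.symm)

lemma aux_not_both_in (htree : G'.IsTree)
    (hIe : ∀ e ∈ G'.edgeSet, ∀ v : Fin (n + 1),
      v ∈ Ie e ↔ ¬ (G'.deleteEdges {e}).Reachable v (Fin.last n))
    {a b : Fin (n+1)} (hab : G'.Adj a b) (ha : a ∈ Ie s(a, b)) : b ∉ Ie s(a, b) := by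
  have he : s(a, b) ∈ G'.edgeSet := hab
  -- every vertex reaches a or b in the deleted graph
  have key : ∀ u : Fin (n+1), Relation.ReflTransGen G'.Adj a u →
      ((G'.deleteEdges {s(a, b)}).Reachable u a ∨ (G'.deleteEdges {s(a, b)}).Reachable u b) := by
    intro u h
    induction h with
    | refl => exact Or.inl (SimpleGraph.Reachable.refl _)
    | @tail m c hmc hadj ih =>
      by_cases hc : s(m, c) = s(a, b)
      · rcases Sym2.eq_iff.mp hc with ⟨h1, h2⟩ | ⟨h1, h2⟩
        · exact Or.inr (by rw [h2])
        · exact Or.inl (by rw [h2])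
      · have hadj' : (G'.deleteEdges {s(a, b)}).Adj m c := by
          rw [SimpleGraph.deleteEdges_adj]
          exact ⟨hadj, by simpa using hc⟩
        exact ih.imp (fun h => hadj'.symm.reachable.trans h) (fun h => hadj'.symm.reachable.trans h)
  have hrtg : Relation.ReflTransGen G'.Adj a (Fin.last n) :=
    (SimpleGraph.reachable_iff_reflTransGen _ _).mp (htree.isConnected.preconnected a (Fin.last n))
  intro hb
  rw [hIe _ he] at ha hb
  rcases key (Fin.last n) hrtg with h | h
  · exact ha h.symm
  · exact hb h.symm

lemma aux_exists_orient (htree : G'.IsTree)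
    (hIe : ∀ e ∈ G'.edgeSet, ∀ v : Fin (n + 1),
      v ∈ Ie e ↔ ¬ (G'.deleteEdges {e}).Reachable v (Fin.last n))
    (e : G'.edgeSet) :
    ∃ x y : Fin (n+1), (e : Sym2 (Fin (n+1))) = s(x, y) ∧ x ∈ Ie e ∧ y ∉ Ie e := by
  obtain ⟨e, he⟩ := e
  induction e with
  | _ u v =>
    simp only
    have huv : G'.Adj u v := he
    by_cases hu : u ∈ Ie s(u, v)
    · exact ⟨u, v, rfl, hu, aux_not_both_in htree hIe huv hu⟩
    · refine ⟨v, u, Sym2.eq_swap.symm, aux_not_both_out htree hIe huv hu, hu⟩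

end GraphAux

/-- for a simple tree `G`, the points `q_e = (1/|I_e|)·e_{I_e}`, one for each
of the `n` edges `e` of `G` (where `I_e` is the component of `G − e` missing `n+1`), are
affinely independent and the union of the bounded cells is their convex hull: the bounded
complex is an `(n-1)`-simplex. -/
theorem stmt8 {n : ℕ} (hn : 1 ≤ n) (μ : Fin (n + 1) → Fin (n + 1) → ℕ)
    (hsym : ∀ i j, μ i j = μ j i) (hloop : ∀ i, μ i i = 0)
    (hsimple : ∀ i j, μ i j ≤ 1)
    (G' : SimpleGraph (Fin (n + 1))) (hG' : ∀ i j, G'.Adj i j ↔ 1 ≤ μ i j)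
    (htree : G'.IsTree)
    (Ie : Sym2 (Fin (n + 1)) → Finset (Fin (n + 1)))
    (hIe : ∀ e ∈ G'.edgeSet, ∀ v : Fin (n + 1),
      v ∈ Ie e ↔ ¬ (G'.deleteEdges {e}).Reachable v (Fin.last n)) :
    Nat.card G'.edgeSet = n ∧
    AffineIndependent ℝ (fun e : G'.edgeSet => qI (Ie e)) ∧
    (⋃ p ∈ {p | p ∈ U n ∧ Bornology.IsBounded (openCell μ p)}, openCell μ p) =
      convexHull ℝ (Set.range fun e : G'.edgeSet => qI (Ie e)) := by
  classical
  haveI : Fintype ↑G'.edgeSet := Fintype.ofFinite _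
  -- unfolding helpers
  have memU : ∀ y : Fin (n+1) → ℝ, y ∈ U n ↔
      (y (Fin.last n) = 0 ∧ ∑ i : Fin n, y i.castSucc = 1) := fun y => Iff.rfl
  have memCell : ∀ p y : Fin (n+1) → ℝ, y ∈ openCell μ p ↔
      (y ∈ U n ∧ ∀ i j, 1 ≤ μ i j →
        ((y i < y j ↔ p i < p j) ∧ (y i = y j ↔ p i = p j))) := fun p y => Iff.rfl
  -- orientation of edges
  obtain ⟨A, B, hAB, hAin, hBout⟩ : ∃ (A B : ↑G'.edgeSet → Fin (n+1)),
      (∀ e : ↑G'.edgeSet, (↑e : Sym2 (Fin (n+1))) = s(A e, B e)) ∧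
      (∀ e : ↑G'.edgeSet, A e ∈ Ie ↑e) ∧
      (∀ e : ↑G'.edgeSet, B e ∉ Ie ↑e) := by
    choose A B h1 h2 h3 using aux_exists_orient htree hIe
    exact ⟨A, B, h1, h2, h3⟩
  have hadjAB : ∀ e : ↑G'.edgeSet, G'.Adj (A e) (B e) := by
    intro e
    have he := e.2
    rw [hAB e] at he
    exact he
  have hAne : ∀ e : ↑G'.edgeSet, ((Ie ↑e).card : ℝ) ≠ 0 := by
    intro e
    exact Nat.cast_ne_zero.mpr (Finset.card_pos.mpr ⟨A e, hAin e⟩).ne'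
  have hcut' : ∀ (e : ↑G'.edgeSet) (u v : Fin (n+1)), G'.Adj u v →
      s(u, v) ≠ (e : Sym2 (Fin (n+1))) → ((u ∈ Ie ↑e) = (v ∈ Ie ↑e)) :=
    fun e u v huv hne => propext (aux_cut hIe e.2 huv hne)
  have huniq : ∀ (e : ↑G'.edgeSet) (u v : Fin (n+1)), G'.Adj u v → u ∈ Ie ↑e →
      v ∉ Ie ↑e → u = A e ∧ v = B e := by
    intro e u v huv hu hv
    by_cases hne : s(u, v) = (e : Sym2 (Fin (n+1)))
    · rw [hAB e] at hne
      rcases Sym2.eq_iff.mp hne with ⟨h1, h2⟩ | ⟨h1, h2⟩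
      · exact ⟨h1, h2⟩
      · exact absurd hu (by rw [h1]; exact hBout e)
    · exact absurd ((aux_cut hIe e.2 huv hne).mp hu) hv
  -- the fundamental identity
  have hF : ∀ (x : Fin (n+1) → ℝ), x (Fin.last n) = 0 → ∀ v,
      (∑ e : ↑G'.edgeSet, if v ∈ Ie ↑e then x (A e) - x (B e) else 0) = x v := by
    intro x hxr
    have hstep : ∀ u v : Fin (n+1), G'.Adj u v →
        (∑ e : ↑G'.edgeSet, if u ∈ Ie ↑e then x (A e) - x (B e) else 0) -
        (∑ e : ↑G'.edgeSet, if v ∈ Ie ↑e then x (A e) - x (B e) else 0) = x u - x v := by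
      intro u v huv
      rw [← Finset.sum_sub_distrib]
      have hemem : s(u, v) ∈ G'.edgeSet := huv
      rw [Finset.sum_eq_single_of_mem (⟨s(u,v), hemem⟩ : ↑G'.edgeSet) (Finset.mem_univ _)]
      · by_cases hu : u ∈ Ie s(u, v)
        · have hv : v ∉ Ie s(u,v) := aux_not_both_in htree hIe huv hu
          obtain ⟨h1, h2⟩ := huniq ⟨s(u,v), hemem⟩ u v huv hu hv
          rw [if_pos hu, if_neg hv, ← h1, ← h2, sub_zero]
        · have hv : v ∈ Ie s(u,v) := aux_not_both_out htree hIe huv hu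
          obtain ⟨h1, h2⟩ := huniq ⟨s(u,v), hemem⟩ v u huv.symm hv hu
          rw [if_neg hu, if_pos hv, ← h1, ← h2, zero_sub, neg_sub]
      · intro f _ hfne
        have hne : s(u, v) ≠ (f : Sym2 (Fin (n+1))) := by
          intro h
          exact hfne (Subtype.ext h.symm)
        have hqq : (if u ∈ Ie ↑f then x (A f) - x (B f) else 0) =
            (if v ∈ Ie ↑f then x (A f) - x (B f) else 0) :=
          if_congr (iff_of_eq (hcut' f u v huv hne)) rfl rfl
        rw [hqq]
        exact sub_self _
    intro v
    have hreach : Relation.ReflTransGen G'.Adj (Fin.last n) v :=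
      (SimpleGraph.reachable_iff_reflTransGen _ _).mp (htree.isConnected.preconnected _ v)
    induction hreach with
    | refl =>
      rw [hxr]
      exact Finset.sum_eq_zero fun e _ => if_neg (aux_last_not_mem hIe e.2)
    | @tail m c hrm hadj ih =>
      have h := hstep m c hadj
      linarith
  -- total weight is 1 on U
  have hsumall : ∀ (x : Fin (n+1) → ℝ), x ∈ U n →
      ∑ e : ↑G'.edgeSet, ((Ie ↑e).card : ℝ) * (x (A e) - x (B e)) = 1 := by
    intro x hx
    rw [memU] at hx
    have h1 : ∀ e : ↑G'.edgeSet, ((Ie ↑e).card : ℝ) * (x (A e) - x (B e)) =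
        ∑ v : Fin (n+1), if v ∈ Ie ↑e then x (A e) - x (B e) else 0 := by
      intro e
      rw [Finset.sum_ite_mem, Finset.univ_inter, Finset.sum_const, nsmul_eq_mul]
    simp_rw [h1]
    rw [Finset.sum_comm]
    have h2 : ∀ v, ∑ e : ↑G'.edgeSet, (if v ∈ Ie ↑e then x (A e) - x (B e) else 0) = x v :=
      hF x hx.1
    simp_rw [h2]
    rw [Fin.sum_univ_castSucc, hx.1, add_zero]
    exact hx.2
  -- q_e lies in U
  have hqU : ∀ e : ↑G'.edgeSet, qI (Ie ↑e) ∈ U n := by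
    intro e
    rw [memU]
    constructor
    · simp [qI, aux_last_not_mem hIe e.2]
    · have h1 : ∑ v : Fin (n+1), qI (Ie ↑e) v = 1 := by
        simp only [qI]
        rw [Finset.sum_ite_mem, Finset.univ_inter, Finset.sum_const, nsmul_eq_mul,
          mul_one_div, div_self (hAne e)]
      rw [Fin.sum_univ_castSucc] at h1
      have h2 : qI (Ie ↑e) (Fin.last n) = 0 := by
        simp [qI, aux_last_not_mem hIe e.2]
      rw [h2, add_zero] at h1
      exact h1
  -- membership in hull given nonneg edge differences
  have hcombo : ∀ x : Fin (n+1) → ℝ, x ∈ U n → (∀ e : ↑G'.edgeSet, x (B e) ≤ x (A e)) →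
      x ∈ convexHull ℝ (Set.range fun e : ↑G'.edgeSet => qI (Ie ↑e)) := by
    intro x hxU hP
    have hxU' := (memU x).mp hxU
    set w : ↑G'.edgeSet → ℝ := fun e => ((Ie ↑e).card : ℝ) * (x (A e) - x (B e)) with hw
    have hwdef : ∀ e : ↑G'.edgeSet, w e = ((Ie ↑e).card : ℝ) * (x (A e) - x (B e)) :=
      fun e => rfl
    have hw0 : ∀ e ∈ (Finset.univ : Finset ↑G'.edgeSet), 0 ≤ w e := fun e _ =>
      mul_nonneg (Nat.cast_nonneg _) (sub_nonneg.mpr (hP e))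
    have hws : ∑ e : ↑G'.edgeSet, w e = 1 := hsumall x hxU
    have hxeq : ∑ e : ↑G'.edgeSet, w e • (qI (Ie ↑e)) = x := by
      funext v
      rw [Finset.sum_apply]
      have hterm : ∀ e : ↑G'.edgeSet, (w e • qI (Ie ↑e)) v =
          if v ∈ Ie ↑e then x (A e) - x (B e) else 0 := by
        intro e
        by_cases hv : v ∈ Ie ↑e
        · rw [if_pos hv]
          show w e * qI (Ie ↑e) v = _
          have hq : qI (Ie ↑e) v = 1 / ((Ie ↑e).card : ℝ) := if_pos hv
          rw [hq, hwdef e, mul_one_div]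
          exact mul_div_cancel_left₀ _ (hAne e)
        · rw [if_neg hv]
          show w e * qI (Ie ↑e) v = 0
          have hq : qI (Ie ↑e) v = 0 := if_neg hv
          rw [hq, mul_zero]
      simp_rw [hterm]
      exact hF x hxU'.1 v
    have hcm := Finset.centerMass_mem_convexHull (t := (Finset.univ : Finset ↑G'.edgeSet))
      hw0 (by rw [hws]; norm_num)
      (fun e _ => Set.mem_range_self (f := fun e : ↑G'.edgeSet => qI (Ie ↑e)) e)
    rwa [Finset.centerMass_eq_of_sum_1 _ _ hws, hxeq] at hcm
  -- the hull is contained in the set of points with nonneg edge differences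
  have hhullsub : convexHull ℝ (Set.range fun e : ↑G'.edgeSet => qI (Ie ↑e)) ⊆
      {x | x ∈ U n ∧ ∀ e : ↑G'.edgeSet, x (B e) ≤ x (A e)} := by
    apply convexHull_min
    · rintro _ ⟨f, rfl⟩
      refine ⟨hqU f, fun e => ?_⟩
      by_cases hef : e = f
      · subst hef
        show qI (Ie ↑e) (B e) ≤ qI (Ie ↑e) (A e)
        have h1 : qI (Ie ↑e) (A e) = 1 / ((Ie ↑e).card : ℝ) := if_pos (hAin e)
        have h2 : qI (Ie ↑e) (B e) = 0 := if_neg (hBout e)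
        rw [h1, h2]
        positivity
      · have hne : s(A e, B e) ≠ (f : Sym2 (Fin (n+1))) := by
          rw [← hAB e]
          exact fun h => hef (Subtype.ext h)
        have hcc := hcut' f (A e) (B e) (hadjAB e) hne
        have hqq : qI (Ie ↑f) (A e) = qI (Ie ↑f) (B e) := by
          simp only [qI]
          exact if_congr (iff_of_eq hcc) rfl rfl
        show qI (Ie ↑f) (B e) ≤ qI (Ie ↑f) (A e)
        rw [hqq]
    · intro x hx y hy a b ha hb hab
      obtain ⟨hxU, hxP⟩ := hx
      obtain ⟨hyU, hyP⟩ := hy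
      have hxU' := (memU x).mp hxU
      have hyU' := (memU y).mp hyU
      refine ⟨(memU _).mpr ⟨?_, ?_⟩, fun e => ?_⟩
      · show a * x (Fin.last n) + b * y (Fin.last n) = 0
        rw [hxU'.1, hyU'.1]; ring
      · show ∑ i : Fin n, (a • x + b • y) i.castSucc = 1
        simp only [Pi.add_apply, Pi.smul_apply, smul_eq_mul]
        rw [Finset.sum_add_distrib, ← Finset.mul_sum, ← Finset.mul_sum, hxU'.2, hyU'.2,
          mul_one, mul_one]
        exact hab
      · show a * x (B e) + b * y (B e) ≤ a * x (A e) + b * y (A e)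
        exact add_le_add (mul_le_mul_of_nonneg_left (hxP e) ha)
          (mul_le_mul_of_nonneg_left (hyP e) hb)
  -- bounded cells
  have hbdd : ∀ x, x ∈ U n → (∀ e : ↑G'.edgeSet, x (B e) ≤ x (A e)) →
      Bornology.IsBounded (openCell μ x) := by
    intro x hxU hP
    have hsub : openCell μ x ⊆ Set.Icc (fun _ => (0:ℝ)) (fun _ => (1:ℝ)) := by
      intro y hy
      obtain ⟨hyU, hsign⟩ := (memCell x y).mp hy
      have hyU' := (memU y).mp hyU
      have hyP : ∀ e : ↑G'.edgeSet, y (B e) ≤ y (A e) := by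
        intro e
        have hμ : 1 ≤ μ (A e) (B e) := (hG' _ _).mp (hadjAB e)
        have hiff := (hsign (A e) (B e) hμ).1
        exact not_lt.mp (fun hlt => (not_lt.mpr (hP e)) (hiff.mp hlt))
      have hy0 : ∀ v, 0 ≤ y v := by
        intro v
        rw [← hF y hyU'.1 v]
        refine Finset.sum_nonneg fun e _ => ?_
        by_cases hv : v ∈ Ie ↑e
        · rw [if_pos hv]; exact sub_nonneg.mpr (hyP e)
        · rw [if_neg hv]
      have hy1 : ∀ v, y v ≤ 1 := by
        intro v
        by_cases hv : v = Fin.last n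
        · rw [hv, hyU'.1]; norm_num
        · obtain ⟨i, rfl⟩ := Fin.exists_castSucc_eq.mpr hv
          calc y i.castSucc ≤ ∑ j : Fin n, y j.castSucc :=
              Finset.single_le_sum (fun j _ => hy0 j.castSucc) (Finset.mem_univ i)
          _ = 1 := hyU'.2
      exact ⟨fun v => hy0 v, fun v => hy1 v⟩
    exact (isCompact_Icc).isBounded.subset hsub
  -- unbounded cells
  have hunbdd : ∀ x, x ∈ U n → (∃ e : ↑G'.edgeSet, x (A e) < x (B e)) →
      ¬ Bornology.IsBounded (openCell μ x) := by
    intro x hxU hex hbd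
    obtain ⟨e, he⟩ := hex
    have hxU' := (memU x).mp hxU
    obtain ⟨m, -, hm⟩ := Finset.exists_max_image (Finset.univ : Finset (Fin (n+1))) x
      ⟨Fin.last n, Finset.mem_univ _⟩
    have hm' : ∀ v, x v ≤ x m := fun v => hm v (Finset.mem_univ v)
    have hmpos : 0 < x m := by
      by_contra hcon
      push_neg at hcon
      have hsn : ∑ i : Fin n, x i.castSucc ≤ 0 :=
        Finset.sum_nonpos fun i _ => le_trans (hm' _) hcon
      linarith [hxU'.2]
    set As : Finset (Fin (n+1)) := (Ie ↑e).filter (fun v => x v ≤ x (A e)) with hAs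
    set Bs : Finset (Fin (n+1)) := Finset.univ.filter (fun v => x v = x m) with hBs
    have hdisj : ∀ v, v ∈ As → v ∉ Bs := by
      intro v hv hv'
      rw [hAs, Finset.mem_filter] at hv
      rw [hBs, Finset.mem_filter] at hv'
      have h1 := hm' (B e)
      have h2 := hv.2
      have h3 := hv'.2
      linarith
    have hAe_mem : A e ∈ As := Finset.mem_filter.mpr ⟨hAin e, le_refl _⟩
    have hm_mem : m ∈ Bs := Finset.mem_filter.mpr ⟨Finset.mem_univ _, rfl⟩
    set z : Fin (n+1) → ℝ := fun v =>
      (if v ∈ Bs then (As.card : ℝ) else 0) - (if v ∈ As then (Bs.card : ℝ) else 0) with hz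
    have hlast_nAs : Fin.last n ∉ As :=
      fun h => aux_last_not_mem hIe e.2 (Finset.mem_filter.mp h).1
    have hlast_nBs : Fin.last n ∉ Bs := by
      intro h
      have := (Finset.mem_filter.mp h).2
      rw [hxU'.1] at this
      linarith
    have hzr : z (Fin.last n) = 0 := by
      rw [hz]
      simp [hlast_nAs, hlast_nBs]
    have hzsum : ∑ v : Fin (n+1), z v = 0 := by
      rw [hz]
      rw [Finset.sum_sub_distrib, Finset.sum_ite_mem, Finset.sum_ite_mem,
        Finset.univ_inter, Finset.univ_inter, Finset.sum_const, Finset.sum_const,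
        nsmul_eq_mul, nsmul_eq_mul]
      ring
    have hIeiff : ∀ u v, G'.Adj u v → x u = x v → (u ∈ Ie ↑e ↔ v ∈ Ie ↑e) := by
      intro u v huv hxy
      constructor
      · intro hu
        by_contra hv
        obtain ⟨h1, h2⟩ := huniq e u v huv hu hv
        have e1 : x u = x (A e) := congrArg x h1
        have e2 : x v = x (B e) := congrArg x h2
        linarith
      · intro hv
        by_contra hu
        obtain ⟨h1, h2⟩ := huniq e v u huv.symm hv hu
        have e1 : x v = x (A e) := congrArg x h1
        have e2 : x u = x (B e) := congrArg x h2
        linarith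
    have hcompat : ∀ u v, G'.Adj u v →
        (x u = x v → z u = z v) ∧ (x u < x v → z u ≤ z v) := by
      intro u v huv
      constructor
      · intro hxy
        have hBs_iff : (u ∈ Bs) ↔ (v ∈ Bs) := by
          rw [hBs]
          simp only [Finset.mem_filter, Finset.mem_univ, true_and, hxy]
        have hAs_iff : (u ∈ As) ↔ (v ∈ As) := by
          rw [hAs]
          simp only [Finset.mem_filter, hxy]
          rw [hIeiff u v huv hxy]
        rw [hz]
        exact congrArg₂ (· - ·) (if_congr hBs_iff rfl rfl) (if_congr hAs_iff rfl rfl)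
      · intro hxy
        have hu_nBs : u ∉ Bs := by
          intro h
          have h2 := (Finset.mem_filter.mp h).2
          have h3 := hm' v
          linarith
        by_cases hvAs : v ∈ As
        · have hvI : v ∈ Ie ↑e := (Finset.mem_filter.mp hvAs).1
          have hvle : x v ≤ x (A e) := (Finset.mem_filter.mp hvAs).2
          have huI : u ∈ Ie ↑e := by
            by_contra hu
            obtain ⟨h1, h2⟩ := huniq e v u huv.symm hvI hu
            have e1 : x v = x (A e) := congrArg x h1
            have e2 : x u = x (B e) := congrArg x h2
            linarith
          have huAs : u ∈ As := Finset.mem_filter.mpr ⟨huI, by linarith⟩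
          have hv_nBs : v ∉ Bs := hdisj v hvAs
          rw [hz]
          simp only [if_pos huAs, if_pos hvAs, if_neg hu_nBs, if_neg hv_nBs]
          exact le_refl _
        · rw [hz]
          simp only [if_neg hvAs, if_neg hu_nBs]
          have h1 : (0:ℝ) ≤ if v ∈ Bs then (As.card:ℝ) else 0 := by
            by_cases h : v ∈ Bs <;> simp [h]
          have h2 : (0:ℝ) ≤ if u ∈ As then (Bs.card:ℝ) else 0 := by
            by_cases h : u ∈ As <;> simp [h]
          linarith
    have hray : ∀ t : ℝ, 0 ≤ t → x + t • z ∈ openCell μ x := by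
      intro t ht
      refine (memCell x _).mpr ⟨(memU _).mpr ⟨?_, ?_⟩, ?_⟩
      · show x (Fin.last n) + t * z (Fin.last n) = 0
        rw [hxU'.1, hzr]; ring
      · show ∑ i : Fin n, (x + t • z) i.castSucc = 1
        simp only [Pi.add_apply, Pi.smul_apply, smul_eq_mul]
        rw [Finset.sum_add_distrib, ← Finset.mul_sum]
        have hz0 : ∑ i : Fin n, z i.castSucc = 0 := by
          have h0 := hzsum
          rw [Fin.sum_univ_castSucc, hzr, add_zero] at h0
          exact h0
        rw [hz0, hxU'.2]; ring
      · intro i j hμ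
        have hadj : G'.Adj i j := (hG' i j).mpr hμ
        have hcij := hcompat i j hadj
        have hcji := hcompat j i hadj.symm
        have hyi : (x + t • z) i = x i + t * z i := rfl
        have hyj : (x + t • z) j = x j + t * z j := rfl
        rw [hyi, hyj]
        rcases lt_trichotomy (x i) (x j) with h | h | h
        · have hz' := hcij.2 h
          have hmul := mul_le_mul_of_nonneg_left hz' ht
          have hlt : x i + t * z i < x j + t * z j := by linarith
          exact ⟨⟨fun _ => h, fun _ => hlt⟩,
            ⟨fun hh => absurd hh (ne_of_lt hlt), fun hh => absurd hh (ne_of_lt h)⟩⟩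
        · have hz' := hcij.1 h
          have heq : x i + t * z i = x j + t * z j := by rw [h, hz']
          exact ⟨⟨fun hh => absurd heq (ne_of_lt hh), fun hh => absurd h (ne_of_lt hh)⟩,
            ⟨fun _ => h, fun _ => heq⟩⟩
        · have hz' := hcji.2 h
          have hmul := mul_le_mul_of_nonneg_left hz' ht
          have hlt : x j + t * z j < x i + t * z i := by linarith
          exact ⟨⟨fun hh => absurd hh (not_lt.mpr (le_of_lt hlt)),
              fun hh => absurd hh (not_lt.mpr (le_of_lt h))⟩,
            ⟨fun hh => absurd hh (ne_of_gt hlt), fun hh => absurd hh (ne_of_gt h)⟩⟩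
    have hzA : z (A e) = -(Bs.card : ℝ) := by
      rw [hz]
      simp only [if_neg (hdisj _ hAe_mem), if_pos hAe_mem, zero_sub]
    have hBpos : (0:ℝ) < Bs.card := by
      exact_mod_cast Finset.card_pos.mpr ⟨m, hm_mem⟩
    rw [isBounded_iff_forall_norm_le] at hbd
    obtain ⟨C, hC⟩ := hbd
    have hznorm : 0 < ‖z‖ := by
      rw [norm_pos_iff]
      intro h0
      rw [h0] at hzA
      simp only [Pi.zero_apply] at hzA
      linarith
    set t : ℝ := (C + ‖x‖ + 1) / ‖z‖ with htdef
    have hxcell : x ∈ openCell μ x :=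
      (memCell x x).mpr ⟨hxU, fun i j _ => ⟨Iff.rfl, Iff.rfl⟩⟩
    have hC0 : ‖x‖ ≤ C := hC x hxcell
    have hxn : (0:ℝ) ≤ ‖x‖ := norm_nonneg x
    have ht : 0 ≤ t := by
      apply div_nonneg _ (le_of_lt hznorm)
      linarith
    have hmem := hC _ (hray t ht)
    have h2 : ‖t • z‖ ≤ ‖x + t • z‖ + ‖x‖ := by
      have hrw : (x + t • z) - x = t • z := add_sub_cancel_left x _
      calc ‖t • z‖ = ‖(x + t • z) - x‖ := by rw [hrw]
        _ ≤ ‖x + t • z‖ + ‖x‖ := norm_sub_le _ _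
    have h3 : ‖t • z‖ = t * ‖z‖ := by
      rw [norm_smul, Real.norm_of_nonneg ht]
    have h4 : t * ‖z‖ = C + ‖x‖ + 1 := div_mul_cancel₀ _ (ne_of_gt hznorm)
    linarith
  -- affine independence
  have haff : AffineIndependent ℝ (fun e : ↑G'.edgeSet => qI (Ie ↑e)) := by
    rw [affineIndependent_iff]
    intro s w hw0 hsum e he
    have hA := congrFun hsum (A e)
    have hB := congrFun hsum (B e)
    rw [Finset.sum_apply] at hA hB
    simp only [Pi.smul_apply, smul_eq_mul, Pi.zero_apply] at hA hB
    have hkey : ∑ f ∈ s, w f * (qI (Ie ↑f) (A e) - qI (Ie ↑f) (B e)) = 0 := by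
      simp only [mul_sub]
      rw [Finset.sum_sub_distrib, hA, hB, sub_zero]
    rw [Finset.sum_eq_single_of_mem e he ?side] at hkey
    case side =>
      intro f hf hfe
      have hne : s(A e, B e) ≠ (f : Sym2 (Fin (n+1))) := by
        rw [← hAB e]
        exact fun h => hfe (Subtype.ext h).symm
      have hcc := hcut' f (A e) (B e) (hadjAB e) hne
      have hqq : qI (Ie ↑f) (A e) = qI (Ie ↑f) (B e) := by
        simp only [qI]
        exact if_congr (iff_of_eq hcc) rfl rfl
      rw [hqq, sub_self, mul_zero]
    have h1 : qI (Ie ↑e) (A e) = 1 / ((Ie ↑e).card : ℝ) := if_pos (hAin e)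
    have h2 : qI (Ie ↑e) (B e) = 0 := if_neg (hBout e)
    rw [h1, h2, sub_zero] at hkey
    exact (mul_eq_zero.mp hkey).resolve_right (one_div_ne_zero (hAne e))
  -- edge count
  have hcard : Nat.card ↑G'.edgeSet = n := by
    have h1 := htree.card_edgeFinset
    rw [SimpleGraph.edgeFinset_card] at h1
    rw [Nat.card_eq_fintype_card]
    simp only [Fintype.card_fin] at h1
    omega
  refine ⟨hcard, haff, ?_⟩
  ext x
  simp only [Set.mem_iUnion, Set.mem_setOf_eq, exists_prop]
  constructor
  · rintro ⟨p, ⟨⟨hpU, hpbdd⟩, hxp⟩⟩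
    obtain ⟨hxU, hsign⟩ := (memCell p x).mp hxp
    have hsub : openCell μ x ⊆ openCell μ p := by
      intro y hy
      obtain ⟨hyU, hysign⟩ := (memCell x y).mp hy
      exact (memCell p y).mpr ⟨hyU, fun i j hμ =>
        ⟨(hysign i j hμ).1.trans (hsign i j hμ).1, (hysign i j hμ).2.trans (hsign i j hμ).2⟩⟩
    have hP : ∀ e : ↑G'.edgeSet, x (B e) ≤ x (A e) := by
      by_contra hcon
      push_neg at hcon
      exact hunbdd x hxU hcon (hpbdd.subset hsub)
    exact hcombo x hxU hP
  · intro hx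
    obtain ⟨hxU, hxP⟩ := hhullsub hx
    refine ⟨x, ⟨⟨hxU, hbdd x hxU hxP⟩, ?_⟩⟩
    exact (memCell x x).mpr ⟨hxU, fun i j _ => ⟨Iff.rfl, Iff.rfl⟩⟩
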